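/- Let u1, u2 ∈ ℝ^D. Let r_1, ..., r_D be i.i.d. real random variables with E[r_i] = 0, E[r_i^2] = 1, E[r_i^3] = 0, and E[r_i^4] = s < ∞, and let h(1), ..., h(D) be i.i.d. random variables uniformly distributed on {1, ..., k}, independent of the r_i. Define g_{1,j} = Σ_{i=1}^{D} u_{1,i} r_i 1{h(i) = j} and g_{2,j} = Σ_{i=1}^{D} u_{2,i} r_i 1{h(i) = j} for j = 1, ..., k, and the VW estimator â_{vw,s} = Σ_{j=1}^{k} g_{1,j} g_{2,j}. Then Var(â_{vw,s}) = (s − 1) Σ_{i=1}^{D} u_{1,i}^2 u_{2,i}^2 + (1/k)[ (Σ_{i=1}^{D} u_{1,i}^2)(Σ_{i=1}^{D} u_{2,i}^2) + (Σ_{i=1}^{D} u_{1,i} u_{2,i})^2 − 2 Σ_{i=1}^{D} u_{1,i}^2 u_{2,i}^2 ]. -/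

import Mathlib

open MeasureTheory ProbabilityTheory

section VWAux
variable {Ω : Type*} [MeasurableSpace Ω] {μ : Measure Ω} [IsProbabilityMeasure μ] {Dn K : ℕ}

lemma vw_ind_sum (a b : Fin K) : (if a = b then (1:ℝ) else 0)
    = ∑ j : Fin K, (if a = j then (1:ℝ) else 0) * (if b = j then (1:ℝ) else 0) := by
  simp [ite_and, mul_ite, mul_one, mul_zero, Finset.sum_ite_eq]

lemma vw_ind_symm (a b : Fin K) : (if a = b then (1:ℝ) else 0) = if b = a then (1:ℝ) else 0 := by
  simp [eq_comm]

lemma vw_meas_ind (j : Fin K) : Measurable (fun a : Fin K => if a = j then (1:ℝ) else 0) :=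
  Measurable.ite measurableSet_eq measurable_const measurable_const

lemma vw_meas_ind2 : Measurable (fun a : Fin K × Fin K => if a.1 = a.2 then (1:ℝ) else 0) :=
  Measurable.ite (measurableSet_eq_fun measurable_fst measurable_snd)
    measurable_const measurable_const

variable {r : Fin Dn → Ω → ℝ} {h : Fin Dn → Ω → Fin K}

lemma vw_pairFact (hrmeas : ∀ i, Measurable (r i)) (hhmeas : ∀ i, Measurable (h i))
    (hindep : iIndepFun (fun i ω => (r i ω, h i ω)) μ)
    {a b : Fin Dn} (hab : a ≠ b) (φ ψ : ℝ × Fin K → ℝ) (hφ : Measurable φ) (hψ : Measurable ψ) :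
    ∫ ω, φ (r a ω, h a ω) * ψ (r b ω, h b ω) ∂μ
      = (∫ ω, φ (r a ω, h a ω) ∂μ) * ∫ ω, ψ (r b ω, h b ω) ∂μ := by
  have h1 : IndepFun (fun ω => (r a ω, h a ω)) (fun ω => (r b ω, h b ω)) μ := hindep.indepFun hab
  exact (h1.comp hφ hψ).integral_fun_mul_eq_mul_integral
    (hφ.comp ((hrmeas a).prodMk (hhmeas a))).aestronglyMeasurable
    (hψ.comp ((hrmeas b).prodMk (hhmeas b))).aestronglyMeasurable

lemma vw_tripleFact (hrmeas : ∀ i, Measurable (r i)) (hhmeas : ∀ i, Measurable (h i))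
    (hindep : iIndepFun (fun i ω => (r i ω, h i ω)) μ)
    {a b m : Fin Dn} (ham : a ≠ m) (hbm : b ≠ m)
    (Φ : (ℝ × Fin K) × (ℝ × Fin K) → ℝ) (ψ : ℝ × Fin K → ℝ)
    (hΦ : Measurable Φ) (hψ : Measurable ψ) :
    ∫ ω, Φ ((r a ω, h a ω), (r b ω, h b ω)) * ψ (r m ω, h m ω) ∂μ
      = (∫ ω, Φ ((r a ω, h a ω), (r b ω, h b ω)) ∂μ) * ∫ ω, ψ (r m ω, h m ω) ∂μ := by
  have h1 : IndepFun (fun ω => ((r a ω, h a ω), (r b ω, h b ω))) (fun ω => (r m ω, h m ω)) μ :=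
    hindep.indepFun_prodMk (fun i => (hrmeas i).prodMk (hhmeas i)) a b m ham hbm
  exact (h1.comp hΦ hψ).integral_fun_mul_eq_mul_integral
    (hΦ.comp (((hrmeas a).prodMk (hhmeas a)).prodMk ((hrmeas b).prodMk (hhmeas b)))).aestronglyMeasurable
    (hψ.comp ((hrmeas m).prodMk (hhmeas m))).aestronglyMeasurable

lemma vw_quadFact (hrmeas : ∀ i, Measurable (r i)) (hhmeas : ∀ i, Measurable (h i))
    (hindep : iIndepFun (fun i ω => (r i ω, h i ω)) μ)
    {a b c d : Fin Dn} (hac : a ≠ c) (had : a ≠ d) (hbc : b ≠ c) (hbd : b ≠ d)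
    (Φ Ψ : (ℝ × Fin K) × (ℝ × Fin K) → ℝ) (hΦ : Measurable Φ) (hΨ : Measurable Ψ) :
    ∫ ω, Φ ((r a ω, h a ω), (r b ω, h b ω)) * Ψ ((r c ω, h c ω), (r d ω, h d ω)) ∂μ
      = (∫ ω, Φ ((r a ω, h a ω), (r b ω, h b ω)) ∂μ)
        * ∫ ω, Ψ ((r c ω, h c ω), (r d ω, h d ω)) ∂μ := by
  have h1 : IndepFun (fun ω => ((r a ω, h a ω), (r b ω, h b ω)))
      (fun ω => ((r c ω, h c ω), (r d ω, h d ω))) μ :=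
    hindep.indepFun_prodMk_prodMk (fun i => (hrmeas i).prodMk (hhmeas i)) a b c d hac had hbc hbd
  exact (h1.comp hΦ hΨ).integral_fun_mul_eq_mul_integral
    (hΦ.comp (((hrmeas a).prodMk (hhmeas a)).prodMk ((hrmeas b).prodMk (hhmeas b)))).aestronglyMeasurable
    (hΨ.comp (((hrmeas c).prodMk (hhmeas c)).prodMk ((hrmeas d).prodMk (hhmeas d)))).aestronglyMeasurable

lemma vw_mom (rr : Ω → ℝ) (hh : Ω → Fin K) (hr : Measurable rr) (hhm : Measurable hh)
    (hrh : IndepFun rr hh μ) (j : Fin K) (n : ℕ) (hunif : μ {ω | hh ω = j} = (K : ENNReal)⁻¹) :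
    ∫ ω, (rr ω)^n * (if hh ω = j then (1:ℝ) else 0) ∂μ = (∫ ω, (rr ω)^n ∂μ) * (1/(K:ℝ)) := by
  have hsmeas : MeasurableSet {ω | hh ω = j} := hhm measurableSet_eq
  have hind : IndepFun (fun ω => (rr ω)^n) (fun ω => if hh ω = j then (1:ℝ) else 0) μ := by
    apply hrh.comp (φ := fun x : ℝ => x ^ n) (ψ := fun a : Fin K => if a = j then (1:ℝ) else 0)
    · exact measurable_id.pow_const n
    · exact vw_meas_ind j
  rw [hind.integral_fun_mul_eq_mul_integral ((hr.pow_const n).aestronglyMeasurable)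
    ((Measurable.ite hsmeas measurable_const measurable_const).aestronglyMeasurable)]
  congr 1
  have h2 : (fun ω => if hh ω = j then (1:ℝ) else 0)
      = Set.indicator {ω | hh ω = j} (fun _ => (1:ℝ)) := by
    funext ω; by_cases hω : hh ω = j <;> simp [hω, Set.indicator]
  rw [h2, integral_indicator_const (1:ℝ) hsmeas, measureReal_def, hunif]
  simp [ENNReal.toReal_inv]

end VWAux
open MeasureTheory ProbabilityTheory

lemma vw_ennreal1 : (1:ENNReal)/2 = 1/4 + 1/4 := by
  simp only [one_div]
  rw [← two_mul, show (4:ENNReal) = 2*2 by norm_num, ENNReal.mul_inv (by norm_num) (by norm_num),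
    ← mul_assoc, ENNReal.mul_inv_cancel (by norm_num) (by norm_num), one_mul]

lemma vw_ennreal2 : (1:ENNReal)/1 = 1/2 + 1/2 := by
  simp only [one_div, inv_one]
  exact ENNReal.inv_two_add_inv_two.symm

section VWAux2
variable {Ω : Type*} [MeasurableSpace Ω] {μ : Measure Ω} [IsProbabilityMeasure μ] {Dn K : ℕ}
variable {r : Fin Dn → Ω → ℝ} {h : Fin Dn → Ω → Fin K}

lemma vw_m2 (hL4 : ∀ i, MemLp (r i) 4 μ) (a b : Fin Dn) :
    MemLp (fun ω => r a ω * r b ω) 2 μ := by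
  haveI : ENNReal.HolderTriple 4 4 2 := ⟨by simpa only [one_div] using vw_ennreal1.symm⟩
  have := MemLp.smul (𝕜 := ℝ) (hL4 b) (hL4 a) (p := 4) (q := 4) (r := 2)
  exact (by simpa [smul_eq_mul] using this : MemLp (r a * r b) 2 μ)

lemma vw_memL2_dom (hL4 : ∀ i, MemLp (r i) 4 μ) (a b : Fin Dn) (F : Ω → ℝ)
    (hF : Measurable F) (hbd : ∀ ω, |F ω| ≤ |r a ω * r b ω|) : MemLp F 2 μ :=
  MemLp.of_le (vw_m2 hL4 a b) hF.aestronglyMeasurable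
    (ae_of_all _ fun ω => by simp only [Real.norm_eq_abs]; exact hbd ω)

lemma vw_int_mul {F G : Ω → ℝ} (hF : MemLp F 2 μ) (hG : MemLp G 2 μ) :
    Integrable (fun ω => F ω * G ω) μ := by
  haveI : ENNReal.HolderTriple 2 2 1 := ⟨by simpa only [one_div] using vw_ennreal2.symm⟩
  have := MemLp.smul (𝕜 := ℝ) hG hF (p := 2) (q := 2) (r := 1)
  rw [← memLp_one_iff_integrable]
  exact (by simpa [smul_eq_mul] using this : MemLp (F * G) 1 μ)

end VWAux2
open MeasureTheory ProbabilityTheory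

set_option linter.unusedSectionVars false

section VWAux3
variable {Ω : Type*} [MeasurableSpace Ω] {μ : Measure Ω} [IsProbabilityMeasure μ] {Dn K : ℕ}
variable {r : Fin Dn → Ω → ℝ} {h : Fin Dn → Ω → Fin K}

lemma vw_memL2_dom1 {Ω : Type*} [MeasurableSpace Ω] {μ : Measure Ω} [IsProbabilityMeasure μ]
    {Dn : ℕ} {r : Fin Dn → Ω → ℝ} (hL4 : ∀ i, MemLp (r i) 4 μ) (a : Fin Dn) (F : Ω → ℝ)
    (hF : Measurable F) (hbd : ∀ ω, |F ω| ≤ |r a ω|) : MemLp F 2 μ :=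
  MemLp.of_le ((hL4 a).mono_exponent (by norm_num)) hF.aestronglyMeasurable
    (ae_of_all _ fun ω => by simp only [Real.norm_eq_abs]; exact hbd ω)

lemma vw_ind_abs (P : Prop) [Decidable P] : |if P then (1:ℝ) else 0| ≤ 1 := by
  split <;> simp

lemma vw_int_canon (hrmeas : ∀ i, Measurable (r i)) (hL4 : ∀ i, MemLp (r i) 4 μ)
    (a b c d : Fin Dn) (E : Ω → ℝ) (hE : Measurable E) (hEbd : ∀ ω, |E ω| ≤ 1) :
    Integrable (fun ω => (r a ω * r b ω) * (r c ω * r d ω) * E ω) μ := by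
  apply Integrable.mono (vw_int_mul (vw_m2 hL4 a b) (vw_m2 hL4 c d))
    ((((hrmeas a).mul (hrmeas b)).mul ((hrmeas c).mul (hrmeas d))).mul hE).aestronglyMeasurable
  refine ae_of_all _ fun ω => ?_
  simp only [Real.norm_eq_abs, Pi.mul_apply, abs_mul]
  exact mul_le_of_le_one_right (by positivity) (hEbd ω)

-- ∫ r_a^2 r_b^2 = 1 for a ≠ b
lemma vw_case_sq (hrmeas : ∀ i, Measurable (r i)) (hhmeas : ∀ i, Measurable (h i))
    (hindep : iIndepFun (fun i ω => (r i ω, h i ω)) μ)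
    (hmom2 : ∀ i, ∫ ω, (r i ω) ^ 2 ∂μ = 1) {a b : Fin Dn} (hab : a ≠ b) :
    ∫ ω, r a ω ^ 2 * r b ω ^ 2 ∂μ = 1 := by
  have hfact := vw_pairFact hrmeas hhmeas hindep hab (fun y => y.1 ^ 2) (fun y => y.1 ^ 2)
    (measurable_fst.pow_const 2) (measurable_fst.pow_const 2)
  simp only at hfact
  rw [hfact, hmom2 a, hmom2 b, one_mul]

-- ∫ r_a r_b 1{h_a = h_b} = 0 for a ≠ b
lemma vw_ET_off (hrmeas : ∀ i, Measurable (r i)) (hhmeas : ∀ i, Measurable (h i))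
    (hindep : iIndepFun (fun i ω => (r i ω, h i ω)) μ)
    (hrh : ∀ i, IndepFun (r i) (h i) μ) (hL4 : ∀ i, MemLp (r i) 4 μ)
    (hmean : ∀ i, ∫ ω, r i ω ∂μ = 0)
    (hunif : ∀ i (j : Fin K), μ {ω | h i ω = j} = (K : ENNReal)⁻¹)
    {a b : Fin Dn} (hab : a ≠ b) :
    ∫ ω, r a ω * r b ω * (if h a ω = h b ω then (1:ℝ) else 0) ∂μ = 0 := by
  have hrw : (fun ω => r a ω * r b ω * (if h a ω = h b ω then (1:ℝ) else 0))
      = fun ω => ∑ j : Fin K, (r a ω * (if h a ω = j then (1:ℝ) else 0))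
          * (r b ω * (if h b ω = j then (1:ℝ) else 0)) := by
    funext ω
    rw [vw_ind_sum (h a ω) (h b ω), Finset.mul_sum]
    exact Finset.sum_congr rfl fun j _ => by ring
  have hint : ∀ j : Fin K, Integrable (fun ω => (r a ω * (if h a ω = j then (1:ℝ) else 0))
      * (r b ω * (if h b ω = j then (1:ℝ) else 0))) μ := by
    intro j
    refine vw_int_mul (vw_memL2_dom1 hL4 a _ ((hrmeas a).mul ((vw_meas_ind j).comp (hhmeas a)))
        (fun ω => ?_))
      (vw_memL2_dom1 hL4 b _ ((hrmeas b).mul ((vw_meas_ind j).comp (hhmeas b))) (fun ω => ?_))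
    · rw [abs_mul]; exact mul_le_of_le_one_right (abs_nonneg _) (vw_ind_abs _)
    · rw [abs_mul]; exact mul_le_of_le_one_right (abs_nonneg _) (vw_ind_abs _)
  rw [hrw, integral_finset_sum _ (fun j _ => hint j)]
  apply Finset.sum_eq_zero; intro j _
  have hfact := vw_pairFact hrmeas hhmeas hindep hab
    (fun y => y.1 * (if y.2 = j then (1:ℝ) else 0)) (fun y => y.1 * (if y.2 = j then (1:ℝ) else 0))
    (measurable_fst.mul ((vw_meas_ind j).comp measurable_snd))
    (measurable_fst.mul ((vw_meas_ind j).comp measurable_snd))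
  simp only at hfact
  rw [hfact]
  have h1 : ∫ ω, r a ω * (if h a ω = j then (1:ℝ) else 0) ∂μ = 0 := by
    have := vw_mom (r a) (h a) (hrmeas a) (hhmeas a) (hrh a) j 1 (hunif a j)
    simpa [hmean a] using this
  rw [h1, zero_mul]

-- ∫ r_a^3 r_b 1{h_a = h_b} = 0 for a ≠ b
lemma vw_case_cube (hrmeas : ∀ i, Measurable (r i)) (hhmeas : ∀ i, Measurable (h i))
    (hindep : iIndepFun (fun i ω => (r i ω, h i ω)) μ)
    (hrh : ∀ i, IndepFun (r i) (h i) μ) (hL4 : ∀ i, MemLp (r i) 4 μ)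
    (hmom3 : ∀ i, ∫ ω, (r i ω) ^ 3 ∂μ = 0)
    (hunif : ∀ i (j : Fin K), μ {ω | h i ω = j} = (K : ENNReal)⁻¹)
    {a b : Fin Dn} (hab : a ≠ b) :
    ∫ ω, r a ω ^ 3 * r b ω * (if h a ω = h b ω then (1:ℝ) else 0) ∂μ = 0 := by
  have hrw : (fun ω => r a ω ^ 3 * r b ω * (if h a ω = h b ω then (1:ℝ) else 0))
      = fun ω => ∑ j : Fin K, (r a ω ^ 3 * (if h a ω = j then (1:ℝ) else 0))
          * (r b ω * (if h b ω = j then (1:ℝ) else 0)) := by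
    funext ω
    rw [vw_ind_sum (h a ω) (h b ω), Finset.mul_sum]
    exact Finset.sum_congr rfl fun j _ => by ring
  have hint : ∀ j : Fin K, Integrable (fun ω => (r a ω ^ 3 * (if h a ω = j then (1:ℝ) else 0))
      * (r b ω * (if h b ω = j then (1:ℝ) else 0))) μ := by
    intro j
    apply (vw_int_canon hrmeas hL4 a a a b
      (fun ω => (if h a ω = j then (1:ℝ) else 0) * (if h b ω = j then (1:ℝ) else 0))
      (((vw_meas_ind j).comp (hhmeas a)).mul ((vw_meas_ind j).comp (hhmeas b)))
      (fun ω => by rw [abs_mul]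
                   exact mul_le_one₀ (vw_ind_abs _) (abs_nonneg _) (vw_ind_abs _))).congr
    exact ae_of_all _ fun ω => by ring
  rw [hrw, integral_finset_sum _ (fun j _ => hint j)]
  apply Finset.sum_eq_zero; intro j _
  have hfact := vw_pairFact hrmeas hhmeas hindep hab
    (fun y => y.1 ^ 3 * (if y.2 = j then (1:ℝ) else 0))
    (fun y => y.1 * (if y.2 = j then (1:ℝ) else 0))
    ((measurable_fst.pow_const 3).mul ((vw_meas_ind j).comp measurable_snd))
    (measurable_fst.mul ((vw_meas_ind j).comp measurable_snd))
  simp only at hfact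
  rw [hfact]
  have h1 : ∫ ω, r a ω ^ 3 * (if h a ω = j then (1:ℝ) else 0) ∂μ = 0 := by
    have := vw_mom (r a) (h a) (hrmeas a) (hhmeas a) (hrh a) j 3 (hunif a j)
    simpa [hmom3 a] using this
  rw [h1, zero_mul]

-- ∫ r_a^2 r_b^2 1{h_a = h_b} = 1/K for a ≠ b
lemma vw_case_pair (hrmeas : ∀ i, Measurable (r i)) (hhmeas : ∀ i, Measurable (h i))
    (hindep : iIndepFun (fun i ω => (r i ω, h i ω)) μ)
    (hrh : ∀ i, IndepFun (r i) (h i) μ) (hL4 : ∀ i, MemLp (r i) 4 μ)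
    (hmom2 : ∀ i, ∫ ω, (r i ω) ^ 2 ∂μ = 1)
    (hunif : ∀ i (j : Fin K), μ {ω | h i ω = j} = (K : ENNReal)⁻¹)
    (hK : 1 ≤ K) {a b : Fin Dn} (hab : a ≠ b) :
    ∫ ω, r a ω ^ 2 * r b ω ^ 2 * (if h a ω = h b ω then (1:ℝ) else 0) ∂μ = 1/(K:ℝ) := by
  have hK0 : (K:ℝ) ≠ 0 := Nat.cast_ne_zero.mpr (by omega)
  have hrw : (fun ω => r a ω ^ 2 * r b ω ^ 2 * (if h a ω = h b ω then (1:ℝ) else 0))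
      = fun ω => ∑ j : Fin K, (r a ω ^ 2 * (if h a ω = j then (1:ℝ) else 0))
          * (r b ω ^ 2 * (if h b ω = j then (1:ℝ) else 0)) := by
    funext ω
    rw [vw_ind_sum (h a ω) (h b ω), Finset.mul_sum]
    exact Finset.sum_congr rfl fun j _ => by ring
  have hint : ∀ j : Fin K, Integrable (fun ω => (r a ω ^ 2 * (if h a ω = j then (1:ℝ) else 0))
      * (r b ω ^ 2 * (if h b ω = j then (1:ℝ) else 0))) μ := by
    intro j
    apply (vw_int_canon hrmeas hL4 a a b b
      (fun ω => (if h a ω = j then (1:ℝ) else 0) * (if h b ω = j then (1:ℝ) else 0))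
      (((vw_meas_ind j).comp (hhmeas a)).mul ((vw_meas_ind j).comp (hhmeas b)))
      (fun ω => by rw [abs_mul]
                   exact mul_le_one₀ (vw_ind_abs _) (abs_nonneg _) (vw_ind_abs _))).congr
    exact ae_of_all _ fun ω => by ring
  rw [hrw, integral_finset_sum _ (fun j _ => hint j)]
  have hterm : ∀ j : Fin K, ∫ ω, (r a ω ^ 2 * (if h a ω = j then (1:ℝ) else 0))
      * (r b ω ^ 2 * (if h b ω = j then (1:ℝ) else 0)) ∂μ = (1/(K:ℝ)) * (1/(K:ℝ)) := by
    intro j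
    have hfact := vw_pairFact hrmeas hhmeas hindep hab
      (fun y => y.1 ^ 2 * (if y.2 = j then (1:ℝ) else 0))
      (fun y => y.1 ^ 2 * (if y.2 = j then (1:ℝ) else 0))
      ((measurable_fst.pow_const 2).mul ((vw_meas_ind j).comp measurable_snd))
      ((measurable_fst.pow_const 2).mul ((vw_meas_ind j).comp measurable_snd))
    simp only at hfact
    rw [hfact]
    have h1 : ∫ ω, r a ω ^ 2 * (if h a ω = j then (1:ℝ) else 0) ∂μ = 1/(K:ℝ) := by
      have := vw_mom (r a) (h a) (hrmeas a) (hhmeas a) (hrh a) j 2 (hunif a j)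
      simpa [hmom2 a] using this
    have h2 : ∫ ω, r b ω ^ 2 * (if h b ω = j then (1:ℝ) else 0) ∂μ = 1/(K:ℝ) := by
      have := vw_mom (r b) (h b) (hrmeas b) (hhmeas b) (hrh b) j 2 (hunif b j)
      simpa [hmom2 b] using this
    rw [h1, h2]
  rw [Finset.sum_congr rfl (fun j _ => hterm j), Finset.sum_const, Finset.card_univ,
    Fintype.card_fin, nsmul_eq_mul]
  field_simp

-- lone index: ∫ r_a^2 r_b r_m 1{h_a=h_b} 1{h_a=h_m} = 0 for distinct a,b,m
lemma vw_case_lone (hrmeas : ∀ i, Measurable (r i)) (hhmeas : ∀ i, Measurable (h i))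
    (hindep : iIndepFun (fun i ω => (r i ω, h i ω)) μ)
    (hrh : ∀ i, IndepFun (r i) (h i) μ) (hL4 : ∀ i, MemLp (r i) 4 μ)
    (hmean : ∀ i, ∫ ω, r i ω ∂μ = 0)
    (hunif : ∀ i (j : Fin K), μ {ω | h i ω = j} = (K : ENNReal)⁻¹)
    {a b m : Fin Dn} (hab : a ≠ b) (ham : a ≠ m) (hbm : b ≠ m) :
    ∫ ω, r a ω ^ 2 * r b ω * r m ω
      * ((if h a ω = h b ω then (1:ℝ) else 0) * (if h a ω = h m ω then (1:ℝ) else 0)) ∂μ = 0 := by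
  have hrw : (fun ω => r a ω ^ 2 * r b ω * r m ω
      * ((if h a ω = h b ω then (1:ℝ) else 0) * (if h a ω = h m ω then (1:ℝ) else 0)))
      = fun ω => ∑ j : Fin K, ∑ j' : Fin K,
          (r a ω ^ 2 * (if h a ω = j then (1:ℝ) else 0) * (if h a ω = j' then (1:ℝ) else 0)
            * (r b ω * (if h b ω = j then (1:ℝ) else 0)))
          * (r m ω * (if h m ω = j' then (1:ℝ) else 0)) := by
    funext ω
    rw [vw_ind_sum (h a ω) (h b ω), vw_ind_sum (h a ω) (h m ω), Finset.sum_mul_sum,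
      Finset.mul_sum]
    refine Finset.sum_congr rfl fun j _ => ?_
    rw [Finset.mul_sum]
    exact Finset.sum_congr rfl fun j' _ => by ring
  have hint : ∀ j j' : Fin K, Integrable (fun ω =>
      (r a ω ^ 2 * (if h a ω = j then (1:ℝ) else 0) * (if h a ω = j' then (1:ℝ) else 0)
        * (r b ω * (if h b ω = j then (1:ℝ) else 0)))
      * (r m ω * (if h m ω = j' then (1:ℝ) else 0))) μ := by
    intro j j'
    apply (vw_int_canon hrmeas hL4 a a b m
      (fun ω => (if h a ω = j then (1:ℝ) else 0) * (if h a ω = j' then (1:ℝ) else 0)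
        * ((if h b ω = j then (1:ℝ) else 0) * (if h m ω = j' then (1:ℝ) else 0)))
      ((((vw_meas_ind j).comp (hhmeas a)).mul ((vw_meas_ind j').comp (hhmeas a))).mul
        (((vw_meas_ind j).comp (hhmeas b)).mul ((vw_meas_ind j').comp (hhmeas m))))
      (fun ω => by
        rw [abs_mul, abs_mul, abs_mul]
        refine mul_le_one₀ (mul_le_one₀ (vw_ind_abs _) (abs_nonneg _) (vw_ind_abs _))
          (mul_nonneg (abs_nonneg _) (abs_nonneg _))
          (mul_le_one₀ (vw_ind_abs _) (abs_nonneg _) (vw_ind_abs _)))).congr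
    exact ae_of_all _ fun ω => by ring
  rw [hrw, integral_finset_sum _ (fun j _ => integrable_finset_sum _ (fun j' _ => hint j j'))]
  apply Finset.sum_eq_zero; intro j _
  rw [integral_finset_sum _ (fun j' _ => hint j j')]
  apply Finset.sum_eq_zero; intro j' _
  have hfact := vw_tripleFact hrmeas hhmeas hindep ham hbm
    (fun z => z.1.1 ^ 2 * (if z.1.2 = j then (1:ℝ) else 0) * (if z.1.2 = j' then (1:ℝ) else 0)
      * (z.2.1 * (if z.2.2 = j then (1:ℝ) else 0)))
    (fun y => y.1 * (if y.2 = j' then (1:ℝ) else 0))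
    (((((measurable_fst.comp measurable_fst).pow_const 2).mul
        ((vw_meas_ind j).comp (measurable_snd.comp measurable_fst))).mul
        ((vw_meas_ind j').comp (measurable_snd.comp measurable_fst))).mul
        ((measurable_fst.comp measurable_snd).mul
          ((vw_meas_ind j).comp (measurable_snd.comp measurable_snd))))
    (measurable_fst.mul ((vw_meas_ind j').comp measurable_snd))
  simp only at hfact
  rw [hfact]
  have h1 : ∫ ω, r m ω * (if h m ω = j' then (1:ℝ) else 0) ∂μ = 0 := by
    have := vw_mom (r m) (h m) (hrmeas m) (hhmeas m) (hrh m) j' 1 (hunif m j')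
    simpa [hmean m] using this
  rw [h1, mul_zero]

-- ∫ (r_a r_b 1{h_a=h_b}) r_m^2 = 0 for distinct a,b,m
lemma vw_case_diag_off (hrmeas : ∀ i, Measurable (r i)) (hhmeas : ∀ i, Measurable (h i))
    (hindep : iIndepFun (fun i ω => (r i ω, h i ω)) μ)
    (hrh : ∀ i, IndepFun (r i) (h i) μ) (hL4 : ∀ i, MemLp (r i) 4 μ)
    (hmean : ∀ i, ∫ ω, r i ω ∂μ = 0)
    (hunif : ∀ i (j : Fin K), μ {ω | h i ω = j} = (K : ENNReal)⁻¹)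
    {a b m : Fin Dn} (hab : a ≠ b) (ham : a ≠ m) (hbm : b ≠ m) :
    ∫ ω, (r a ω * r b ω * (if h a ω = h b ω then (1:ℝ) else 0)) * r m ω ^ 2 ∂μ = 0 := by
  have hfact := vw_tripleFact hrmeas hhmeas hindep ham hbm
    (fun z => z.1.1 * z.2.1 * (if z.1.2 = z.2.2 then (1:ℝ) else 0))
    (fun y => y.1 ^ 2)
    (((measurable_fst.comp measurable_fst).mul (measurable_fst.comp measurable_snd)).mul
      (vw_meas_ind2.comp ((measurable_snd.comp measurable_fst).prodMk
        (measurable_snd.comp measurable_snd))))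
    (measurable_fst.pow_const 2)
  simp only at hfact
  rw [hfact, vw_ET_off hrmeas hhmeas hindep hrh hL4 hmean hunif hab, zero_mul]

-- ∫ (r_a r_b 1{h_a=h_b}) (r_c r_d 1{h_c=h_d}) = 0 for pairwise disjoint {a,b},{c,d}, a≠b
lemma vw_case_4 (hrmeas : ∀ i, Measurable (r i)) (hhmeas : ∀ i, Measurable (h i))
    (hindep : iIndepFun (fun i ω => (r i ω, h i ω)) μ)
    (hrh : ∀ i, IndepFun (r i) (h i) μ) (hL4 : ∀ i, MemLp (r i) 4 μ)
    (hmean : ∀ i, ∫ ω, r i ω ∂μ = 0)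
    (hunif : ∀ i (j : Fin K), μ {ω | h i ω = j} = (K : ENNReal)⁻¹)
    {a b c d : Fin Dn} (hab : a ≠ b) (hac : a ≠ c) (had : a ≠ d) (hbc : b ≠ c) (hbd : b ≠ d) :
    ∫ ω, (r a ω * r b ω * (if h a ω = h b ω then (1:ℝ) else 0))
      * (r c ω * r d ω * (if h c ω = h d ω then (1:ℝ) else 0)) ∂μ = 0 := by
  have hfact := vw_quadFact hrmeas hhmeas hindep hac had hbc hbd
    (fun z => z.1.1 * z.2.1 * (if z.1.2 = z.2.2 then (1:ℝ) else 0))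
    (fun z => z.1.1 * z.2.1 * (if z.1.2 = z.2.2 then (1:ℝ) else 0))
    (((measurable_fst.comp measurable_fst).mul (measurable_fst.comp measurable_snd)).mul
      (vw_meas_ind2.comp ((measurable_snd.comp measurable_fst).prodMk
        (measurable_snd.comp measurable_snd))))
    (((measurable_fst.comp measurable_fst).mul (measurable_fst.comp measurable_snd)).mul
      (vw_meas_ind2.comp ((measurable_snd.comp measurable_fst).prodMk
        (measurable_snd.comp measurable_snd))))
  simp only at hfact
  rw [hfact, vw_ET_off hrmeas hhmeas hindep hrh hL4 hmean hunif hab, zero_mul]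

end VWAux3
open MeasureTheory ProbabilityTheory

set_option linter.unusedSectionVars false
set_option maxHeartbeats 1000000

section VWAux4
variable {Ω : Type*} [MeasurableSpace Ω] {μ : Measure Ω} [IsProbabilityMeasure μ] {Dn K : ℕ}
variable {r : Fin Dn → Ω → ℝ} {h : Fin Dn → Ω → Fin K}

lemma vw_key (hrmeas : ∀ i, Measurable (r i)) (hhmeas : ∀ i, Measurable (h i))
    (hindep : iIndepFun (fun i ω => (r i ω, h i ω)) μ)
    (hrh : ∀ i, IndepFun (r i) (h i) μ) (hL4 : ∀ i, MemLp (r i) 4 μ)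
    (hmean : ∀ i, ∫ ω, r i ω ∂μ = 0) (hmom2 : ∀ i, ∫ ω, (r i ω) ^ 2 ∂μ = 1)
    (hmom3 : ∀ i, ∫ ω, (r i ω) ^ 3 ∂μ = 0) {s : ℝ} (hmom4 : ∀ i, ∫ ω, (r i ω) ^ 4 ∂μ = s)
    (hunif : ∀ i (j : Fin K), μ {ω | h i ω = j} = (K : ENNReal)⁻¹) (hK : 1 ≤ K)
    (i i' l l' : Fin Dn) :
    ∫ ω, (r i ω * r i' ω * (if h i ω = h i' ω then (1:ℝ) else 0))
        * (r l ω * r l' ω * (if h l ω = h l' ω then (1:ℝ) else 0)) ∂μ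
      = (if i = i' then (1:ℝ) else 0) * (if l = l' then (1:ℝ) else 0)
        + (1/(K:ℝ)) * ((if i = l then (1:ℝ) else 0) * (if i' = l' then (1:ℝ) else 0))
        + (1/(K:ℝ)) * ((if i = l' then (1:ℝ) else 0) * (if i' = l then (1:ℝ) else 0))
        + (s - 1 - 2/(K:ℝ)) * ((if i = i' then (1:ℝ) else 0) * ((if l = l' then (1:ℝ) else 0)
            * (if i = l then (1:ℝ) else 0))) := by
  by_cases hii' : i = i'
  · subst hii'
    by_cases hll' : l = l'
    · subst hll'
      by_cases hil : i = l
      · subst hil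
        refine Eq.trans (integral_congr_ae (ae_of_all _ (fun ω => ?_)))
          ((hmom4 i).trans ?_)
        · simp only []
          simp only [eq_self_iff_true, if_true]; ring
        · simp <;> ring
      · refine Eq.trans (integral_congr_ae (ae_of_all _ (fun ω => ?_)))
          ((vw_case_sq hrmeas hhmeas hindep hmom2 hil).trans ?_)
        · simp only []
          simp only [eq_self_iff_true, if_true]; ring
        · simp [hil] <;> ring
    · by_cases hil : i = l
      · subst hil
        refine Eq.trans (integral_congr_ae (ae_of_all _ (fun ω => ?_)))
          ((vw_case_cube hrmeas hhmeas hindep hrh hL4 hmom3 hunif hll').trans ?_)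
        · simp only []
          simp only [eq_self_iff_true, if_true]; ring
        · simp [hll'] <;> ring
      · by_cases hil' : i = l'
        · subst hil'
          refine Eq.trans (integral_congr_ae (ae_of_all _ (fun ω => ?_)))
            ((vw_case_cube hrmeas hhmeas hindep hrh hL4 hmom3 hunif hil).trans ?_)
          · simp only []
            rw [vw_ind_symm (h l ω) (h i ω)]; simp only [eq_self_iff_true, if_true]; ring
          · simp [hil, hll'] <;> ring
        · refine Eq.trans (integral_congr_ae (ae_of_all _ (fun ω => ?_)))
            ((vw_case_diag_off hrmeas hhmeas hindep hrh hL4 hmean hunif hll'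
              (fun hc => hil hc.symm) (fun hc => hil' hc.symm)).trans ?_)
          · simp only [eq_self_iff_true, if_true]; ring
          · simp [hil, hil', hll'] <;> ring
  · have hi'i : ¬ i' = i := fun hc => hii' hc.symm
    by_cases hll' : l = l'
    · subst hll'
      by_cases hil : i = l
      · subst hil
        refine Eq.trans (integral_congr_ae (ae_of_all _ (fun ω => ?_)))
          ((vw_case_cube hrmeas hhmeas hindep hrh hL4 hmom3 hunif hii').trans ?_)
        · simp only []
          simp only [eq_self_iff_true, if_true]; ring
        · simp [hii', hi'i] <;> ring
      · by_cases hi'l : i' = l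
        · subst hi'l
          refine Eq.trans (integral_congr_ae (ae_of_all _ (fun ω => ?_)))
            ((vw_case_cube hrmeas hhmeas hindep hrh hL4 hmom3 hunif hi'i).trans ?_)
          · simp only []
            rw [vw_ind_symm (h i ω) (h i' ω)]; simp only [eq_self_iff_true, if_true]; ring
          · simp [hii', hi'i] <;> ring
        · refine Eq.trans (integral_congr_ae (ae_of_all _ (fun ω => ?_)))
            ((vw_case_diag_off hrmeas hhmeas hindep hrh hL4 hmean hunif hii' hil hi'l).trans ?_)
          · simp only [eq_self_iff_true, if_true]; ring
          · simp [hii', hil, hi'l] <;> ring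
    · by_cases hil : i = l
      · subst hil
        by_cases hi'l' : i' = l'
        · subst hi'l'
          refine Eq.trans (integral_congr_ae (ae_of_all _ (fun ω => ?_)))
            ((vw_case_pair hrmeas hhmeas hindep hrh hL4 hmom2 hunif hK hii').trans ?_)
          · simp only []
            by_cases hc : h i ω = h i' ω
            · simp only [if_pos hc] <;> ring
            · simp only [if_neg hc] <;> ring
          · simp [hii', hi'i] <;> ring
        · refine Eq.trans (integral_congr_ae (ae_of_all _ (fun ω => ?_)))
            ((vw_case_lone hrmeas hhmeas hindep hrh hL4 hmean hunif hii' hll' hi'l').trans ?_)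
          · simp only []
            ring
          · simp [hii', hll', hi'l'] <;> ring
      · by_cases hil' : i = l'
        · subst hil'
          by_cases hi'l : i' = l
          · subst hi'l
            refine Eq.trans (integral_congr_ae (ae_of_all _ (fun ω => ?_)))
              ((vw_case_pair hrmeas hhmeas hindep hrh hL4 hmom2 hunif hK hii').trans ?_)
            · simp only []
              rw [vw_ind_symm (h i' ω) (h i ω)]
              by_cases hc : h i ω = h i' ω
              · simp only [if_pos hc] <;> ring
              · simp only [if_neg hc] <;> ring
            · simp [hii', hi'i] <;> ring
          · refine Eq.trans (integral_congr_ae (ae_of_all _ (fun ω => ?_)))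
              ((vw_case_lone hrmeas hhmeas hindep hrh hL4 hmean hunif hii' hil hi'l).trans ?_)
            · simp only []
              rw [vw_ind_symm (h l ω) (h i ω)]
              ring
            · simp [hii', hil, hi'l] <;> ring
        · by_cases hi'l : i' = l
          · subst hi'l
            refine Eq.trans (integral_congr_ae (ae_of_all _ (fun ω => ?_)))
              ((vw_case_lone hrmeas hhmeas hindep hrh hL4 hmean hunif hi'i hll' hil').trans ?_)
            · simp only []
              rw [vw_ind_symm (h i ω) (h i' ω)]
              ring
            · simp [hii', hil'] <;> ring
          · by_cases hi'l' : i' = l'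
            · subst hi'l'
              refine Eq.trans (integral_congr_ae (ae_of_all _ (fun ω => ?_)))
                ((vw_case_lone hrmeas hhmeas hindep hrh hL4 hmean hunif hi'i hi'l hil).trans ?_)
              · simp only []
                rw [vw_ind_symm (h i ω) (h i' ω), vw_ind_symm (h l ω) (h i' ω)]
                ring
              · simp [hii', hil, hi'l] <;> ring
            · exact (vw_case_4 hrmeas hhmeas hindep hrh hL4 hmean hunif hii' hil hil'
                hi'l hi'l').trans (by simp [hii', hil, hil'] <;> ring)

end VWAux4
open MeasureTheory ProbabilityTheory

set_option linter.unusedSectionVars false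

lemma vw_sum1 {n : ℕ} (u1 u2 : Fin n → ℝ) :
    ∑ p : Fin n × Fin n, ∑ q : Fin n × Fin n, (u1 p.1 * u2 p.2) * (u1 q.1 * u2 q.2)
      * ((if p.1 = p.2 then (1:ℝ) else 0) * (if q.1 = q.2 then (1:ℝ) else 0))
    = (∑ i, u1 i * u2 i)^2 := by
  simp only [Fintype.sum_prod_type]
  simp only [mul_ite, ite_mul, mul_zero, zero_mul, mul_one, one_mul,
    Finset.sum_ite_eq, Finset.sum_ite_eq', Finset.mem_univ, if_true, Finset.sum_ite_irrel,
    Finset.sum_const_zero]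
  rw [sq, Finset.sum_mul_sum]

lemma vw_sum2 {n : ℕ} (u1 u2 : Fin n → ℝ) :
    ∑ p : Fin n × Fin n, ∑ q : Fin n × Fin n, (u1 p.1 * u2 p.2) * (u1 q.1 * u2 q.2)
      * ((if p.1 = q.1 then (1:ℝ) else 0) * (if p.2 = q.2 then (1:ℝ) else 0))
    = (∑ i, u1 i ^ 2) * (∑ i, u2 i ^ 2) := by
  simp only [Fintype.sum_prod_type]
  simp only [mul_ite, ite_mul, mul_zero, zero_mul, mul_one, one_mul,
    Finset.sum_ite_eq, Finset.sum_ite_eq', Finset.mem_univ, if_true, Finset.sum_ite_irrel,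
    Finset.sum_const_zero]
  rw [Finset.sum_mul_sum]
  refine Finset.sum_congr rfl fun a _ => ?_
  refine Finset.sum_congr rfl fun b _ => ?_
  ring

lemma vw_sum3 {n : ℕ} (u1 u2 : Fin n → ℝ) :
    ∑ p : Fin n × Fin n, ∑ q : Fin n × Fin n, (u1 p.1 * u2 p.2) * (u1 q.1 * u2 q.2)
      * ((if p.1 = q.2 then (1:ℝ) else 0) * (if p.2 = q.1 then (1:ℝ) else 0))
    = (∑ i, u1 i * u2 i)^2 := by
  simp only [Fintype.sum_prod_type]
  simp only [mul_ite, ite_mul, mul_zero, zero_mul, mul_one, one_mul,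
    Finset.sum_ite_eq, Finset.sum_ite_eq', Finset.mem_univ, if_true, Finset.sum_ite_irrel,
    Finset.sum_const_zero]
  rw [sq, Finset.sum_mul_sum]
  refine Finset.sum_congr rfl fun a _ => ?_
  refine Finset.sum_congr rfl fun b _ => ?_
  ring

lemma vw_sum4 {n : ℕ} (u1 u2 : Fin n → ℝ) :
    ∑ p : Fin n × Fin n, ∑ q : Fin n × Fin n, (u1 p.1 * u2 p.2) * (u1 q.1 * u2 q.2)
      * ((if p.1 = p.2 then (1:ℝ) else 0) * ((if q.1 = q.2 then (1:ℝ) else 0)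
          * (if p.1 = q.1 then (1:ℝ) else 0)))
    = ∑ i, u1 i ^ 2 * u2 i ^ 2 := by
  simp only [Fintype.sum_prod_type]
  simp only [mul_ite, ite_mul, mul_zero, zero_mul, mul_one, one_mul,
    Finset.sum_ite_eq, Finset.sum_ite_eq', Finset.mem_univ, if_true, Finset.sum_ite_irrel,
    Finset.sum_const_zero]
  refine Finset.sum_congr rfl fun a _ => ?_
  ring

section VWAux5
variable {Ω : Type*} [MeasurableSpace Ω] {μ : Measure Ω} [IsProbabilityMeasure μ] {Dn K : ℕ}
variable {r : Fin Dn → Ω → ℝ} {h : Fin Dn → Ω → Fin K}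

lemma vw_Aeq (u1 u2 : Fin Dn → ℝ) (ω : Ω) :
    (∑ j : Fin K, (∑ i, u1 i * r i ω * (if h i ω = j then (1:ℝ) else 0))
        * (∑ i, u2 i * r i ω * (if h i ω = j then (1:ℝ) else 0)))
    = ∑ p : Fin Dn × Fin Dn, (u1 p.1 * u2 p.2)
        * (r p.1 ω * r p.2 ω * (if h p.1 ω = h p.2 ω then (1:ℝ) else 0)) := by
  rw [Fintype.sum_prod_type]
  simp only [Finset.sum_mul_sum]
  rw [Finset.sum_comm]
  refine Finset.sum_congr rfl fun i _ => ?_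
  rw [Finset.sum_comm]
  refine Finset.sum_congr rfl fun i' _ => ?_
  rw [vw_ind_sum (h i ω) (h i' ω)]
  simp only [Finset.mul_sum]
  refine Finset.sum_congr rfl fun j _ => ?_
  ring

lemma vw_memT (hrmeas : ∀ i, Measurable (r i)) (hhmeas : ∀ i, Measurable (h i))
    (hL4 : ∀ i, MemLp (r i) 4 μ) (a b : Fin Dn) :
    MemLp (fun ω => r a ω * r b ω * (if h a ω = h b ω then (1:ℝ) else 0)) 2 μ := by
  refine vw_memL2_dom hL4 a b _
    (((hrmeas a).mul (hrmeas b)).mul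
      (vw_meas_ind2.comp ((hhmeas a).prodMk (hhmeas b)))) (fun ω => ?_)
  rw [abs_mul]
  exact mul_le_of_le_one_right (abs_nonneg _) (vw_ind_abs _)

lemma vw_ET (hrmeas : ∀ i, Measurable (r i)) (hhmeas : ∀ i, Measurable (h i))
    (hindep : iIndepFun (fun i ω => (r i ω, h i ω)) μ)
    (hrh : ∀ i, IndepFun (r i) (h i) μ) (hL4 : ∀ i, MemLp (r i) 4 μ)
    (hmean : ∀ i, ∫ ω, r i ω ∂μ = 0) (hmom2 : ∀ i, ∫ ω, (r i ω) ^ 2 ∂μ = 1)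
    (hunif : ∀ i (j : Fin K), μ {ω | h i ω = j} = (K : ENNReal)⁻¹)
    (a b : Fin Dn) :
    ∫ ω, r a ω * r b ω * (if h a ω = h b ω then (1:ℝ) else 0) ∂μ
      = if a = b then (1:ℝ) else 0 := by
  by_cases hab : a = b
  · subst hab
    rw [if_pos rfl]
    refine Eq.trans (integral_congr_ae (ae_of_all _ (fun ω => ?_))) (hmom2 a)
    simp only [eq_self_iff_true, if_true]; ring
  · rw [if_neg hab]
    exact vw_ET_off hrmeas hhmeas hindep hrh hL4 hmean hunif hab

end VWAux5




open MeasureTheory ProbabilityTheory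

set_option maxHeartbeats 1000000 in
/-- Let `u1, u2 ∈ ℝ^D`, let `r_1, …, r_D` be i.i.d. with `E[r_i] = 0`,
`E[r_i^2] = 1`, `E[r_i^3] = 0`, `E[r_i^4] = s < ∞`, and let `h(1), …, h(D)` be i.i.d. uniform on
`{1, …, k}`, independent of the `r_i` (the pairs `(r_i, h(i))` form an independent family and
within each pair `r_i ⟂ h(i)`). With `g_{1,j} = Σ_i u_{1,i} r_i 1{h(i)=j}`,
`g_{2,j} = Σ_i u_{2,i} r_i 1{h(i)=j}`, the VW estimator `â_{vw,s} = Σ_j g_{1,j} g_{2,j}` has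
variance `(s−1) Σ u_{1,i}^2 u_{2,i}^2 + (1/k)[(Σ u_{1,i}^2)(Σ u_{2,i}^2) + (Σ u_{1,i}u_{2,i})^2
− 2 Σ u_{1,i}^2 u_{2,i}^2]`. -/
theorem stmt14 {Ω : Type*} [MeasurableSpace Ω] (μ : Measure Ω) [IsProbabilityMeasure μ]
    (D k : ℕ) (hk : 1 ≤ k) (u1 u2 : Fin D → ℝ) (s : ℝ)
    (r : Fin D → Ω → ℝ) (h : Fin D → Ω → Fin k)
    (hrmeas : ∀ i, Measurable (r i)) (hhmeas : ∀ i, Measurable (h i))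
    (hindep : iIndepFun (fun i ω => (r i ω, h i ω)) μ)
    (hrh : ∀ i, IndepFun (r i) (h i) μ)
    (hident : ∀ i i', IdentDistrib (r i) (r i') μ μ)
    (hL4 : ∀ i, MemLp (r i) 4 μ)
    (hmean : ∀ i, ∫ ω, r i ω ∂μ = 0)
    (hmom2 : ∀ i, ∫ ω, (r i ω) ^ 2 ∂μ = 1)
    (hmom3 : ∀ i, ∫ ω, (r i ω) ^ 3 ∂μ = 0)
    (hmom4 : ∀ i, ∫ ω, (r i ω) ^ 4 ∂μ = s)
    (hunif : ∀ i (j : Fin k), μ {ω | h i ω = j} = (k : ENNReal)⁻¹) :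
    variance (fun ω => ∑ j : Fin k,
        (∑ i : Fin D, u1 i * r i ω * (if h i ω = j then (1 : ℝ) else 0))
          * (∑ i : Fin D, u2 i * r i ω * (if h i ω = j then (1 : ℝ) else 0))) μ
      = (s - 1) * (∑ i : Fin D, (u1 i) ^ 2 * (u2 i) ^ 2)
        + (1 / (k : ℝ)) * ((∑ i : Fin D, (u1 i) ^ 2) * (∑ i : Fin D, (u2 i) ^ 2)
            + (∑ i : Fin D, u1 i * u2 i) ^ 2
            - 2 * ∑ i : Fin D, (u1 i) ^ 2 * (u2 i) ^ 2) := by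
  have hAfun : (fun ω => ∑ j : Fin k,
        (∑ i : Fin D, u1 i * r i ω * (if h i ω = j then (1 : ℝ) else 0))
          * (∑ i : Fin D, u2 i * r i ω * (if h i ω = j then (1 : ℝ) else 0)))
      = fun ω => ∑ p : Fin D × Fin D, (u1 p.1 * u2 p.2)
          * (r p.1 ω * r p.2 ω * (if h p.1 ω = h p.2 ω then (1:ℝ) else 0)) :=
    funext fun ω => vw_Aeq u1 u2 ω
  rw [hAfun]
  have hA2 : MemLp (fun ω => ∑ p : Fin D × Fin D, (u1 p.1 * u2 p.2)
      * (r p.1 ω * r p.2 ω * (if h p.1 ω = h p.2 ω then (1:ℝ) else 0))) 2 μ :=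
    memLp_finsetSum _ (fun (p : Fin D × Fin D) _ => ((vw_memT hrmeas hhmeas hL4 p.1 p.2).const_mul _))
  rw [variance_eq_sub hA2]
  simp only [Pi.pow_apply]
  have intT : ∀ p : Fin D × Fin D, Integrable (fun ω => (u1 p.1 * u2 p.2)
      * (r p.1 ω * r p.2 ω * (if h p.1 ω = h p.2 ω then (1:ℝ) else 0))) μ :=
    fun p => ((vw_memT hrmeas hhmeas hL4 p.1 p.2).integrable (by norm_num)).const_mul _
  have intTT : ∀ p q : Fin D × Fin D, Integrable (fun ω =>
      ((u1 p.1 * u2 p.2) * (r p.1 ω * r p.2 ω * (if h p.1 ω = h p.2 ω then (1:ℝ) else 0)))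
      * ((u1 q.1 * u2 q.2) * (r q.1 ω * r q.2 ω * (if h q.1 ω = h q.2 ω then (1:ℝ) else 0)))) μ := by
    intro p q
    apply Integrable.congr (((vw_int_mul (vw_memT hrmeas hhmeas hL4 p.1 p.2)
      (vw_memT hrmeas hhmeas hL4 q.1 q.2)).const_mul ((u1 p.1 * u2 p.2) * (u1 q.1 * u2 q.2))))
    exact ae_of_all _ fun ω => by ring
  have hEA : ∫ ω, (∑ p : Fin D × Fin D, (u1 p.1 * u2 p.2)
      * (r p.1 ω * r p.2 ω * (if h p.1 ω = h p.2 ω then (1:ℝ) else 0))) ∂μ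
      = ∑ i, u1 i * u2 i := by
    rw [integral_finset_sum _ (fun p _ => intT p)]
    have hstep : ∀ p : Fin D × Fin D, p ∈ Finset.univ →
        (∫ ω, (u1 p.1 * u2 p.2)
          * (r p.1 ω * r p.2 ω * (if h p.1 ω = h p.2 ω then (1:ℝ) else 0)) ∂μ)
        = (u1 p.1 * u2 p.2) * (if p.1 = p.2 then (1:ℝ) else 0) := fun p _ => by
      rw [integral_const_mul, vw_ET hrmeas hhmeas hindep hrh hL4 hmean hmom2 hunif p.1 p.2]
    rw [Finset.sum_congr rfl hstep, Fintype.sum_prod_type]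
    simp [mul_ite, mul_one, mul_zero, Finset.sum_ite_eq]
  have hEA2 : ∫ ω, (∑ p : Fin D × Fin D, (u1 p.1 * u2 p.2)
      * (r p.1 ω * r p.2 ω * (if h p.1 ω = h p.2 ω then (1:ℝ) else 0))) ^ 2 ∂μ
      = (∑ i, u1 i * u2 i)^2
        + (1/(k:ℝ)) * ((∑ i, u1 i ^ 2) * (∑ i, u2 i ^ 2))
        + (1/(k:ℝ)) * (∑ i, u1 i * u2 i)^2
        + (s - 1 - 2/(k:ℝ)) * (∑ i, u1 i ^ 2 * u2 i ^ 2) := by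
    have hsq : (fun ω => (∑ p : Fin D × Fin D, (u1 p.1 * u2 p.2)
        * (r p.1 ω * r p.2 ω * (if h p.1 ω = h p.2 ω then (1:ℝ) else 0))) ^ 2)
        = fun ω => ∑ p : Fin D × Fin D, ∑ q : Fin D × Fin D,
          ((u1 p.1 * u2 p.2) * (r p.1 ω * r p.2 ω * (if h p.1 ω = h p.2 ω then (1:ℝ) else 0)))
          * ((u1 q.1 * u2 q.2) * (r q.1 ω * r q.2 ω * (if h q.1 ω = h q.2 ω then (1:ℝ) else 0))) :=
      funext fun ω => by rw [sq, Finset.sum_mul_sum]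
    rw [hsq, integral_finset_sum _ (fun p _ => integrable_finset_sum _ (fun q _ => intTT p q))]
    have hterm : ∀ p : Fin D × Fin D, p ∈ Finset.univ →
        (∫ ω, ∑ q : Fin D × Fin D,
          ((u1 p.1 * u2 p.2) * (r p.1 ω * r p.2 ω * (if h p.1 ω = h p.2 ω then (1:ℝ) else 0)))
          * ((u1 q.1 * u2 q.2) * (r q.1 ω * r q.2 ω * (if h q.1 ω = h q.2 ω then (1:ℝ) else 0))) ∂μ)
        = ∑ q : Fin D × Fin D,
          ((u1 p.1 * u2 p.2) * (u1 q.1 * u2 q.2)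
            * ((if p.1 = p.2 then (1:ℝ) else 0) * (if q.1 = q.2 then (1:ℝ) else 0))
          + (1/(k:ℝ)) * ((u1 p.1 * u2 p.2) * (u1 q.1 * u2 q.2)
            * ((if p.1 = q.1 then (1:ℝ) else 0) * (if p.2 = q.2 then (1:ℝ) else 0)))
          + (1/(k:ℝ)) * ((u1 p.1 * u2 p.2) * (u1 q.1 * u2 q.2)
            * ((if p.1 = q.2 then (1:ℝ) else 0) * (if p.2 = q.1 then (1:ℝ) else 0)))
          + (s - 1 - 2/(k:ℝ)) * ((u1 p.1 * u2 p.2) * (u1 q.1 * u2 q.2)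
            * ((if p.1 = p.2 then (1:ℝ) else 0) * ((if q.1 = q.2 then (1:ℝ) else 0)
                * (if p.1 = q.1 then (1:ℝ) else 0))))) := by
      intro p _
      rw [integral_finset_sum _ (fun q _ => intTT p q)]
      refine Finset.sum_congr rfl fun q _ => ?_
      trans (∫ ω, ((u1 p.1 * u2 p.2) * (u1 q.1 * u2 q.2))
          * ((r p.1 ω * r p.2 ω * (if h p.1 ω = h p.2 ω then (1:ℝ) else 0))
            * (r q.1 ω * r q.2 ω * (if h q.1 ω = h q.2 ω then (1:ℝ) else 0))) ∂μ)
      · exact integral_congr_ae (ae_of_all _ (fun ω => by ring))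
      · rw [integral_const_mul,
          vw_key hrmeas hhmeas hindep hrh hL4 hmean hmom2 hmom3 hmom4 hunif hk p.1 p.2 q.1 q.2]
        ring
    rw [Finset.sum_congr rfl hterm]
    simp only [Finset.sum_add_distrib]
    simp only [← Finset.mul_sum]
    rw [vw_sum1 u1 u2, vw_sum2 u1 u2, vw_sum3 u1 u2, vw_sum4 u1 u2]
  rw [hEA2, hEA]
  ring
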